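/- Nonsymmetric Lovász Local Lemma: if A_1,…,A_n are events with dependency digraph D, and x_1,…,x_n ∈ [0,1) satisfy Pr[A_i] ≤ x_i ∏_{(i,j)∈E(D)} (1 - x_j) for all i, then Pr[⋂ᵢ ¬A_i] > 0. -/
import Mathlib


open MeasureTheory Finset

/-- The event `B` is mutually independent of the family of events `A j`: for every
finite subfamily and every choice of each event or its complement, the probability of
the intersection with `B` factors. -/
def MutuallyIndepOf {Ω : Type*} [MeasurableSpace Ω] (μ : Measure Ω) (B : Set Ω)
    {ι : Type*} (A : ι → Set Ω) : Prop :=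
  ∀ (J : Finset ι) (σ : ι → Bool),
    μ (B ∩ ⋂ j ∈ J, (if σ j then A j else (A j)ᶜ))
      = μ B * μ (⋂ j ∈ J, (if σ j then A j else (A j)ᶜ))

section Aux
variable {Ω : Type*} [MeasurableSpace Ω] {μ : Measure Ω} [IsProbabilityMeasure μ]
  {n : ℕ} {A : Fin n → Set Ω}

omit [IsProbabilityMeasure μ] in
lemma ll_indep (i : Fin n) (D : Fin n → Finset (Fin n))
    (hdep : MutuallyIndepOf μ (A i) (fun j : {j : Fin n // j ∉ D i ∧ j ≠ i} => A j.1))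
    (S : Finset (Fin n)) (hS : ∀ j ∈ S, j ∉ D i ∧ j ≠ i) :
    μ (A i ∩ ⋂ j ∈ S, (A j)ᶜ) = μ (A i) * μ (⋂ j ∈ S, (A j)ᶜ) := by
  have h := hdep (S.subtype fun j => j ∉ D i ∧ j ≠ i) (fun _ => false)
  simp only [Bool.false_eq_true, if_false] at h
  have heq : (⋂ j ∈ S.subtype (fun j => j ∉ D i ∧ j ≠ i), (A (j : Fin n))ᶜ)
      = ⋂ j ∈ S, (A j)ᶜ := by
    ext ω
    simp only [Set.mem_iInter, Finset.mem_subtype]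
    exact ⟨fun h j hj => h ⟨j, hS j hj⟩ hj, fun h j hj => h j.1 hj⟩
  rw [heq] at h
  exact h

/-- Split a complement-intersection measure in the reals. -/
lemma ll_split (hA : ∀ i, MeasurableSet (A i)) (j : Fin n) (T : Finset (Fin n)) :
    (μ (⋂ k ∈ insert j T, (A k)ᶜ)).toReal
      = (μ (⋂ k ∈ T, (A k)ᶜ)).toReal - (μ (A j ∩ ⋂ k ∈ T, (A k)ᶜ)).toReal := by
  set N := ⋂ k ∈ T, (A k)ᶜ with hN
  have h1 : μ (N ∩ A j) + μ (N \ A j) = μ N := measure_inter_add_diff N (hA j)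
  have h2 : (⋂ k ∈ insert j T, (A k)ᶜ) = N \ A j := by
    rw [Finset.set_biInter_insert, Set.diff_eq, Set.inter_comm]
  have h3 : A j ∩ N = N ∩ A j := Set.inter_comm _ _
  rw [h2, h3]
  have := ENNReal.toReal_add (measure_ne_top μ (N ∩ A j)) (measure_ne_top μ (N \ A j))
  rw [h1] at this
  linarith [this]

/-- The key induction of the Lovász Local Lemma: conditioned on avoiding any set `S` of
events, the probability of `A i` is at most `x i`. -/
lemma ll_main (hA : ∀ i, MeasurableSet (A i)) (D : Fin n → Finset (Fin n))
    (hdep : ∀ i, MutuallyIndepOf μ (A i)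
      (fun j : {j : Fin n // j ∉ D i ∧ j ≠ i} => A j.1))
    (x : Fin n → ℝ) (hx0 : ∀ i, 0 ≤ x i) (hx1 : ∀ i, x i < 1)
    (hineq : ∀ i, (μ (A i)).toReal ≤ x i * ∏ j ∈ D i, (1 - x j)) :
    ∀ m : ℕ, ∀ S : Finset (Fin n), S.card ≤ m → ∀ i, i ∉ S →
      (μ (A i ∩ ⋂ j ∈ S, (A j)ᶜ)).toReal ≤ x i * (μ (⋂ j ∈ S, (A j)ᶜ)).toReal := by
  have hxfac : ∀ j, 0 ≤ 1 - x j := fun j => by linarith [hx1 j]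
  have hprod1 : ∀ (U : Finset (Fin n)), ∏ j ∈ U, (1 - x j) ≤ 1 :=
    fun U => Finset.prod_le_one (fun j _ => hxfac j) (fun j _ => by linarith [hx0 j])
  have hprod0 : ∀ (U : Finset (Fin n)), 0 ≤ ∏ j ∈ U, (1 - x j) :=
    fun U => Finset.prod_nonneg (fun j _ => hxfac j)
  intro m
  induction m with
  | zero =>
    intro S hS i _
    have hSe : S = ∅ := Finset.card_eq_zero.mp (Nat.le_zero.mp hS)
    subst hSe
    simp only [Finset.notMem_empty, Set.iInter_of_empty, Set.iInter_univ,
      Set.inter_univ, measure_univ, ENNReal.toReal_one, mul_one]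
    calc (μ (A i)).toReal ≤ x i * ∏ j ∈ D i, (1 - x j) := hineq i
      _ ≤ x i * 1 := mul_le_mul_of_nonneg_left (hprod1 _) (hx0 i)
      _ = x i := mul_one _
  | succ m ih =>
    intro S hScard i hiS
    set S1 : Finset (Fin n) := S ∩ D i with hS1
    set S2 : Finset (Fin n) := S \ D i with hS2
    have hunion : S2 ∪ S1 = S := Finset.sdiff_union_inter S (D i)
    have hS1D : S1 ⊆ D i := Finset.inter_subset_right
    have hS1S : S1 ⊆ S := Finset.inter_subset_left
    have hS2S : S2 ⊆ S := Finset.sdiff_subset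
    -- the chain step: adjoining the dependent events one by one
    have chain : ∀ T ⊆ S1, (∏ j ∈ T, (1 - x j)) * (μ (⋂ j ∈ S2, (A j)ᶜ)).toReal
        ≤ (μ (⋂ j ∈ (S2 ∪ T), (A j)ᶜ)).toReal := by
      intro T hT
      induction T using Finset.induction_on with
      | empty => simp
      | @insert j T hjT ihT =>
        have hjS1 : j ∈ S1 := hT (Finset.mem_insert_self j T)
        have hTs : T ⊆ S1 := (Finset.subset_insert j T).trans hT
        have ihc := ihT hTs
        have hjD : j ∈ D i := hS1D hjS1
        have hjn2 : j ∉ S2 := fun hj => (Finset.mem_sdiff.mp hj).2 hjD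
        have hjnot : j ∉ S2 ∪ T := by
          simp only [Finset.mem_union]; exact fun h => h.elim hjn2 hjT
        have hsub : S2 ∪ T ⊆ S.erase j := by
          intro k hk
          refine Finset.mem_erase.mpr ⟨fun hkj => hjnot (hkj ▸ hk), ?_⟩
          rcases Finset.mem_union.mp hk with h | h
          · exact hS2S h
          · exact hS1S (hTs h)
        have hcard : (S2 ∪ T).card ≤ m := by
          have h1 := Finset.card_le_card hsub
          rw [Finset.card_erase_of_mem (hS1S hjS1)] at h1
          omega
        have hrec := ih (S2 ∪ T) hcard j hjnot
        have hUI : S2 ∪ insert j T = insert j (S2 ∪ T) := by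
          rw [Finset.union_insert]
        rw [hUI, ll_split hA]
        have hP0 : 0 ≤ (μ (⋂ j ∈ (S2 ∪ T), (A j)ᶜ)).toReal := ENNReal.toReal_nonneg
        have step1 : (∏ k ∈ insert j T, (1 - x k)) * (μ (⋂ k ∈ S2, (A k)ᶜ)).toReal
            = (1 - x j) * ((∏ k ∈ T, (1 - x k)) * (μ (⋂ k ∈ S2, (A k)ᶜ)).toReal) := by
          rw [Finset.prod_insert hjT]; ring
        rw [step1]
        have step2 : (1 - x j) * ((∏ k ∈ T, (1 - x k)) * (μ (⋂ k ∈ S2, (A k)ᶜ)).toReal)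
            ≤ (1 - x j) * (μ (⋂ k ∈ (S2 ∪ T), (A k)ᶜ)).toReal :=
          mul_le_mul_of_nonneg_left ihc (hxfac j)
        nlinarith [hrec, hP0]
    -- independence from the non-neighbours
    have hS2prop : ∀ j ∈ S2, j ∉ D i ∧ j ≠ i := by
      intro j hj
      rcases Finset.mem_sdiff.mp hj with ⟨hjS, hjD⟩
      exact ⟨hjD, fun hji => hiS (hji ▸ hjS)⟩
    have hindep := ll_indep i D (hdep i) S2 hS2prop
    have hmono : μ (A i ∩ ⋂ j ∈ S, (A j)ᶜ) ≤ μ (A i ∩ ⋂ j ∈ S2, (A j)ᶜ) := by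
      refine measure_mono (Set.inter_subset_inter_right _ ?_)
      intro ω hω
      simp only [Set.mem_iInter] at hω ⊢
      exact fun j hj => hω j (hS2S hj)
    have hprodsub : ∏ j ∈ D i, (1 - x j) ≤ ∏ j ∈ S1, (1 - x j) := by
      have := Finset.prod_sdiff hS1D (f := fun j => 1 - x j)
      nlinarith [hprod1 (D i \ S1), hprod0 S1, hprod0 (D i \ S1)]
    calc (μ (A i ∩ ⋂ j ∈ S, (A j)ᶜ)).toReal
        ≤ (μ (A i ∩ ⋂ j ∈ S2, (A j)ᶜ)).toReal :=
          ENNReal.toReal_mono (measure_ne_top μ _) hmono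
      _ = (μ (A i)).toReal * (μ (⋂ j ∈ S2, (A j)ᶜ)).toReal := by
          rw [hindep, ENNReal.toReal_mul]
      _ ≤ (x i * ∏ j ∈ D i, (1 - x j)) * (μ (⋂ j ∈ S2, (A j)ᶜ)).toReal :=
          mul_le_mul_of_nonneg_right (hineq i) ENNReal.toReal_nonneg
      _ ≤ (x i * ∏ j ∈ S1, (1 - x j)) * (μ (⋂ j ∈ S2, (A j)ᶜ)).toReal := by
          refine mul_le_mul_of_nonneg_right ?_ ENNReal.toReal_nonneg
          exact mul_le_mul_of_nonneg_left hprodsub (hx0 i)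
      _ = x i * ((∏ j ∈ S1, (1 - x j)) * (μ (⋂ j ∈ S2, (A j)ᶜ)).toReal) := by ring
      _ ≤ x i * (μ (⋂ j ∈ (S2 ∪ S1), (A j)ᶜ)).toReal :=
          mul_le_mul_of_nonneg_left (chain S1 (le_refl S1)) (hx0 i)
      _ = x i * (μ (⋂ j ∈ S, (A j)ᶜ)).toReal := by rw [hunion]

/-- Lower bound on the probability of avoiding all events in `S`. -/
lemma ll_pos (hA : ∀ i, MeasurableSet (A i)) (D : Fin n → Finset (Fin n))
    (hdep : ∀ i, MutuallyIndepOf μ (A i)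
      (fun j : {j : Fin n // j ∉ D i ∧ j ≠ i} => A j.1))
    (x : Fin n → ℝ) (hx0 : ∀ i, 0 ≤ x i) (hx1 : ∀ i, x i < 1)
    (hineq : ∀ i, (μ (A i)).toReal ≤ x i * ∏ j ∈ D i, (1 - x j)) :
    ∀ S : Finset (Fin n), ∏ j ∈ S, (1 - x j) ≤ (μ (⋂ j ∈ S, (A j)ᶜ)).toReal := by
  intro S
  induction S using Finset.induction_on with
  | empty => simp
  | @insert j S hjS ihS =>
    have hmain := ll_main hA D hdep x hx0 hx1 hineq S.card S (le_refl _) j hjS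
    rw [ll_split hA, Finset.prod_insert hjS]
    have hxfac : 0 ≤ 1 - x j := by linarith [hx1 j]
    have hP0 : 0 ≤ (μ (⋂ k ∈ S, (A k)ᶜ)).toReal := ENNReal.toReal_nonneg
    nlinarith [mul_le_mul_of_nonneg_left ihS hxfac]

end Aux

/-- Nonsymmetric Lovász Local Lemma: if A₁,…,Aₙ are events with dependency digraph D
(given by out-neighborhoods `D i`), and x₁,…,xₙ ∈ [0,1) satisfy
Pr[Aᵢ] ≤ xᵢ ∏_{j ∈ D i} (1-xⱼ) for all i, then Pr[⋂ᵢ ¬Aᵢ] > 0. -/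
theorem stmt8 {Ω : Type*} [MeasurableSpace Ω] (μ : Measure Ω) [IsProbabilityMeasure μ]
    (n : ℕ) (A : Fin n → Set Ω) (hA : ∀ i, MeasurableSet (A i))
    (D : Fin n → Finset (Fin n))
    (hdep : ∀ i, MutuallyIndepOf μ (A i)
      (fun j : {j : Fin n // j ∉ D i ∧ j ≠ i} => A j.1))
    (x : Fin n → ℝ) (hx0 : ∀ i, 0 ≤ x i) (hx1 : ∀ i, x i < 1)
    (hineq : ∀ i, (μ (A i)).toReal ≤ x i * ∏ j ∈ D i, (1 - x j)) :
    0 < μ (⋂ i, (A i)ᶜ) := by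
  have hpos := ll_pos hA D hdep x hx0 hx1 hineq Finset.univ
  have heq : (⋂ i, (A i)ᶜ) = ⋂ j ∈ (Finset.univ : Finset (Fin n)), (A j)ᶜ := by simp
  rw [heq]
  have hp : (0:ℝ) < ∏ j : Fin n, (1 - x j) :=
    Finset.prod_pos fun j _ => by linarith [hx1 j]
  have : 0 < (μ (⋂ j ∈ (Finset.univ : Finset (Fin n)), (A j)ᶜ)).toReal :=
    lt_of_lt_of_le hp hpos
  exact (ENNReal.toReal_pos_iff.mp this).1
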